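/- arXiv:2509.15446 — 2 statements merged into one kernel-verified Lean document; each statement's English description precedes it below -/
import Mathlib

section
/- For every real δ > 0 there exists a constant c > 0 (depending on δ) such that for all positive integers k, |(-δ)^{↑k} / (1+δ)^{↑k}| ≤ c · k^{-1-2δ}, where x^{↑k} = x(x+1)⋯(x+k-1) denotes the rising factorial. -/
open Finset

/-- Rising factorial (Pochhammer symbol): `x^{↑k} = x(x+1)⋯(x+k-1)`. -/
noncomputable def risingFac (x : ℝ) (k : ℕ) : ℝ := ∏ j ∈ Finset.range k, (x + j)

lemma risingFac_succ (x : ℝ) (k : ℕ) :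
    risingFac x (k+1) = risingFac x k * (x + k) := by
  simp [risingFac, Finset.prod_range_succ]

lemma risingFac_pos (x : ℝ) (hx : 0 < x) (k : ℕ) : 0 < risingFac x k := by
  unfold risingFac
  exact Finset.prod_pos fun j _ => by positivity

lemma key_ineq (δ t : ℝ) (hδ : 0 < δ) (ht : 2*δ ≤ t) :
    (t - 2*δ) * (t+1) ^ (2*δ) ≤ t ^ (1 + 2*δ) := by
  have ht0 : 0 < t := lt_of_lt_of_le (by linarith) ht
  rcases eq_or_lt_of_le ht with h | h
  · rw [← h]
    simp only [sub_self, zero_mul]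
    positivity
  · have h1 : 0 < t - 2*δ := by linarith
    have hlog1 : Real.log (t+1) - Real.log t ≤ 1/t := by
      rw [← Real.log_div (by positivity) (ne_of_gt ht0)]
      calc Real.log ((t+1)/t) ≤ (t+1)/t - 1 :=
            Real.log_le_sub_one_of_pos (by positivity)
        _ = 1/t := by field_simp; ring
    have hlog2 : Real.log (t - 2*δ) - Real.log t ≤ -(2*δ/t) := by
      rw [← Real.log_div (ne_of_gt h1) (ne_of_gt ht0)]
      calc Real.log ((t - 2*δ)/t) ≤ (t - 2*δ)/t - 1 :=
            Real.log_le_sub_one_of_pos (by positivity)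
        _ = -(2*δ/t) := by field_simp; ring
    have hlogs : Real.log (t - 2*δ) + Real.log (t+1) * (2*δ)
        ≤ Real.log t * (1 + 2*δ) := by
      have h2δ : (0:ℝ) ≤ 2*δ := by linarith
      have h1' := mul_le_mul_of_nonneg_left hlog1 h2δ
      ring_nf at h1' hlog2 ⊢
      linarith [h1', hlog2]
    have e1 : (t - 2*δ) * (t+1) ^ (2*δ)
        = Real.exp (Real.log (t - 2*δ) + Real.log (t+1) * (2*δ)) := by
      rw [Real.exp_add, Real.exp_log h1,
        Real.rpow_def_of_pos (by positivity : (0:ℝ) < t+1)]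
    have e2 : t ^ (1 + 2*δ) = Real.exp (Real.log t * (1 + 2*δ)) := by
      rw [Real.rpow_def_of_pos ht0]
    rw [e1, e2]
    exact Real.exp_le_exp.mpr hlogs

theorem stmt0 (δ : ℝ) (hδ : 0 < δ) :
    ∃ c > 0, ∀ k : ℕ, 1 ≤ k →
      |risingFac (-δ) k / risingFac (1 + δ) k| ≤ c * (k : ℝ) ^ (-1 - 2 * δ) := by
  set A : ℕ → ℝ := fun k => |risingFac (-δ) k / risingFac (1+δ) k| with hA
  have hAnn : ∀ k, 0 ≤ A k := fun k => abs_nonneg _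
  set k₀ : ℕ := ⌈δ⌉₊ with hk₀def
  have hk₀ : δ ≤ (k₀ : ℝ) := Nat.le_ceil δ
  -- one descent step
  have step : ∀ n : ℕ, δ ≤ (n:ℝ) →
      A (n+1) * (((n:ℝ)+1)+δ) ^ (1+2*δ) ≤ A n * ((n:ℝ)+δ) ^ (1+2*δ) := by
    intro n hn
    have hden : 0 < risingFac (1+δ) n := risingFac_pos _ (by linarith) n
    have hden1 : 0 < (1 + δ + (n:ℝ)) := by positivity
    have hArec : A (n+1) = A n * ((n:ℝ) - δ) / (1 + δ + n) := by
      simp only [hA, risingFac_succ]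
      rw [abs_div, abs_div, abs_mul, abs_mul]
      rw [abs_of_nonneg (show (0:ℝ) ≤ -δ + n by linarith),
        abs_of_pos hden1, abs_of_pos hden]
      rw [div_mul_eq_mul_div, div_div]
      ring_nf
    have hpos1 : (0:ℝ) < (n:ℝ) + δ := by positivity
    have hpos2 : (0:ℝ) < (n:ℝ) + 1 + δ := by positivity
    have hrw : (((n:ℝ)+1)+δ) ^ (1+2*δ)
        = (((n:ℝ)+1)+δ) * (((n:ℝ)+1)+δ) ^ (2*δ) := by
      rw [Real.rpow_add hpos2, Real.rpow_one]
    have hkey := key_ineq δ ((n:ℝ)+δ) hδ (by linarith)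
    have hkey' : ((n:ℝ) - δ) * (((n:ℝ)+1)+δ) ^ (2*δ) ≤ ((n:ℝ)+δ) ^ (1+2*δ) := by
      have : (n:ℝ) + δ + 1 = ((n:ℝ)+1)+δ := by ring
      have h2 : (n:ℝ) + δ - 2*δ = (n:ℝ) - δ := by ring
      rw [this, h2] at hkey
      exact hkey
    calc A (n+1) * (((n:ℝ)+1)+δ) ^ (1+2*δ)
        = A n * (((n:ℝ) - δ) * (((n:ℝ)+1)+δ) ^ (2*δ)) := by
          rw [hArec, hrw]; field_simp; ring
      _ ≤ A n * (((n:ℝ)+δ) ^ (1+2*δ)) :=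
          mul_le_mul_of_nonneg_left hkey' (hAnn n)
  -- iterate: for k ≥ k₀
  have iter : ∀ m : ℕ, A (k₀+m) * (((k₀+m:ℕ):ℝ)+δ) ^ (1+2*δ)
      ≤ A k₀ * ((k₀:ℝ)+δ) ^ (1+2*δ) := by
    intro m
    induction m with
    | zero => simp
    | succ m ih =>
      have hn : δ ≤ ((k₀+m:ℕ):ℝ) := by
        push_cast; linarith [hk₀, Nat.cast_nonneg (α := ℝ) m]
      have := step (k₀+m) hn
      have hcast : (((k₀+(m+1):ℕ)):ℝ) = ((k₀+m:ℕ):ℝ) + 1 := by push_cast; ring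
      calc A (k₀+(m+1)) * (((k₀+(m+1):ℕ):ℝ)+δ) ^ (1+2*δ)
          = A ((k₀+m)+1) * ((((k₀+m:ℕ):ℝ)+1)+δ) ^ (1+2*δ) := by
            rw [hcast]; ring_nf
        _ ≤ A (k₀+m) * (((k₀+m:ℕ):ℝ)+δ) ^ (1+2*δ) := this
        _ ≤ A k₀ * ((k₀:ℝ)+δ) ^ (1+2*δ) := ih
  -- the constant
  set c : ℝ := A k₀ * ((k₀:ℝ)+δ) ^ (1+2*δ)
      + (∑ j ∈ Finset.range (k₀+1), A j * ((j:ℕ):ℝ) ^ (1+2*δ)) + 1 with hc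
  have hsum_nn : 0 ≤ ∑ j ∈ Finset.range (k₀+1), A j * ((j:ℕ):ℝ) ^ (1+2*δ) :=
    Finset.sum_nonneg fun j _ => mul_nonneg (hAnn j) (Real.rpow_nonneg (Nat.cast_nonneg j) _)
  have hcpos : 0 < c := by
    have h1 : 0 ≤ A k₀ * ((k₀:ℝ)+δ) ^ (1+2*δ) :=
      mul_nonneg (hAnn k₀) (Real.rpow_nonneg (by positivity) _)
    linarith
  refine ⟨c, hcpos, fun k hk => ?_⟩
  have hkR : (1:ℝ) ≤ (k:ℝ) := by exact_mod_cast hk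
  have hkpos : (0:ℝ) < (k:ℝ) := by linarith
  -- main bound: A k * k^(1+2δ) ≤ c
  have main : A k * ((k:ℝ)) ^ (1+2*δ) ≤ c := by
    rcases le_or_gt k k₀ with hle | hgt
    · have hmem : k ∈ Finset.range (k₀+1) := Finset.mem_range.mpr (by omega)
      have := Finset.single_le_sum
        (f := fun j => A j * ((j:ℕ):ℝ) ^ (1+2*δ))
        (fun j _ => mul_nonneg (hAnn j) (Real.rpow_nonneg (Nat.cast_nonneg j) _)) hmem
      have h2 : A k * ((k:ℕ):ℝ) ^ (1+2*δ)
          ≤ ∑ j ∈ Finset.range (k₀+1), A j * ((j:ℕ):ℝ) ^ (1+2*δ) := this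
      have h1 : 0 ≤ A k₀ * ((k₀:ℝ)+δ) ^ (1+2*δ) :=
        mul_nonneg (hAnn k₀) (Real.rpow_nonneg (by positivity) _)
      simp only [hc]
      linarith [h2]
    · obtain ⟨m, rfl⟩ : ∃ m, k = k₀ + m := ⟨k - k₀, by omega⟩
      have h1 := iter m
      have h2 : ((k₀+m:ℕ):ℝ) ^ (1+2*δ) ≤ (((k₀+m:ℕ):ℝ)+δ) ^ (1+2*δ) :=
        Real.rpow_le_rpow (Nat.cast_nonneg _) (by linarith) (by linarith)
      have h3 : A (k₀+m) * ((k₀+m:ℕ):ℝ) ^ (1+2*δ)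
          ≤ A (k₀+m) * (((k₀+m:ℕ):ℝ)+δ) ^ (1+2*δ) :=
        mul_le_mul_of_nonneg_left h2 (hAnn _)
      simp only [hc]
      linarith
  -- finish
  have hexp : (-1 - 2*δ) = -(1 + 2*δ) := by ring
  rw [hexp, Real.rpow_neg (le_of_lt hkpos), mul_comm c, inv_mul_eq_div,
    le_div_iff₀ (Real.rpow_pos_of_pos hkpos _)]
  exact main
end

section
/- Let δ > 0 and let (a_k)_{k≥1} be a real (or complex) sequence, with a_0 := 1. Define (G_δ a)_k = (k(k+δ)/2)·a_{k-1} − k²·a_k + (k(k−δ)/2)·a_{k+1} for k ≥ 1. Then for every integer m ≥ 1, ∑_{k=1}^m [(-δ)^{↑k} / (k·(1+δ)^{↑k})]·(G_δ a)_k = (δ/2)(a_1 − 1) − (1/2)(m−δ)·[(-δ)^{↑m}/(1+δ)^{↑m}]·(a_m − a_{m+1}). -/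
open Finset

/-- The operator `G_δ` acting on sequences with the convention `a 0 = 1`. -/
noncomputable def Gop (δ : ℝ) (a : ℕ → ℝ) (k : ℕ) : ℝ :=
  (k * (k + δ) / 2) * a (k - 1) - (k : ℝ) ^ 2 * a k + (k * (k - δ) / 2) * a (k + 1)

lemma rf_succ (x : ℝ) (n : ℕ) : risingFac x (n + 1) = risingFac x n * (x + n) := by
  simp [risingFac, Finset.prod_range_succ]

lemma rf_pos {δ : ℝ} (hδ : 0 < δ) (k : ℕ) : 0 < risingFac (1 + δ) k := by
  unfold risingFac
  apply Finset.prod_pos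
  intro j _
  positivity

noncomputable def Tel (δ : ℝ) (a : ℕ → ℝ) (k : ℕ) : ℝ :=
  -1 / 2 * ((k : ℝ) - δ) * (risingFac (-δ) k / risingFac (1 + δ) k) * (a k - a (k + 1))

lemma step (δ : ℝ) (hδ : 0 < δ) (a : ℕ → ℝ) (n : ℕ) :
    risingFac (-δ) (n + 1) / ((n + 1 : ℕ) * risingFac (1 + δ) (n + 1)) * Gop δ a (n + 1)
      = Tel δ a (n + 1) - Tel δ a n := by
  have hQ : risingFac (1 + δ) n ≠ 0 := (rf_pos hδ n).ne'
  have h1 : (1 + δ + (n : ℝ)) ≠ 0 := by positivity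
  have h2 : ((n : ℝ) + 1) ≠ 0 := by positivity
  simp only [Tel, Gop, rf_succ, Nat.add_sub_cancel]
  push_cast
  field_simp
  ring

theorem stmt1 (δ : ℝ) (hδ : 0 < δ) (a : ℕ → ℝ) (ha0 : a 0 = 1) (m : ℕ) (hm : 1 ≤ m) :
    ∑ k ∈ Finset.Icc 1 m,
        (risingFac (-δ) k / (k * risingFac (1 + δ) k)) * Gop δ a k
      = δ / 2 * (a 1 - 1)
        - 1 / 2 * ((m : ℝ) - δ) * (risingFac (-δ) m / risingFac (1 + δ) m)
          * (a m - a (m + 1)) := by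
  have key : ∀ m, 1 ≤ m → ∑ k ∈ Finset.Icc 1 m,
      (risingFac (-δ) k / (k * risingFac (1 + δ) k)) * Gop δ a k
      = Tel δ a m - Tel δ a 0 := by
    intro m hm
    induction m, hm using Nat.le_induction with
    | base =>
      simpa using step δ hδ a 0
    | succ n hn ih =>
      rw [Finset.sum_Icc_succ_top (by omega), ih]
      have := step δ hδ a n
      push_cast at this ⊢
      rw [this]
      ring
  rw [key m hm]
  have h0 : Tel δ a 0 = δ / 2 * (1 - a 1) := by
    simp [Tel, risingFac, ha0]
    ring
  rw [h0]
  simp only [Tel]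
  ring
end
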